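/- Decay of a complex function from a weighted derivative bound. Let β ∈ ℂ with Im β ≥ 0, let p ≥ 0 be an integer, and let B′ > 0. Suppose v : (1, ∞) → ℂ is differentiable, v(r) → 0 as r → ∞, and |d/dr (e^{2iβr} v(r))| ≤ B′ e^{−2 r Im β} r^{−p−2} for all r > 1. Then |v(r)| ≤ B′ / ((p+1) r^{p+1}) for all r > 1. -/

import Mathlib

open MeasureTheory Filter

/-- Decay of a complex function from a weighted derivative bound. -/
theorem decay_from_weighted_derivative_bound
    (β : ℂ) (hβ : 0 ≤ β.im) (p : ℕ) (B' : ℝ) (hB' : 0 < B')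
    (v : ℝ → ℂ)
    (hv : ∀ r : ℝ, 1 < r → DifferentiableAt ℝ v r)
    (hlim : Filter.Tendsto v Filter.atTop (nhds 0))
    (hbound : ∀ r : ℝ, 1 < r →
      ‖deriv (fun s : ℝ => Complex.exp (2 * Complex.I * β * s) * v s) r‖ ≤
        B' * Real.exp (-2 * r * β.im) / r ^ (p + 2)) :
    ∀ r : ℝ, 1 < r → ‖v r‖ ≤ B' / ((p + 1) * r ^ (p + 1)) := by
  intro r hr
  set g : ℝ → ℂ := fun s : ℝ => Complex.exp (2 * Complex.I * β * s) * v s with hgdef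
  have hr0 : (0:ℝ) < r := lt_trans one_pos hr
  have hgdiff : ∀ s : ℝ, 1 < s → DifferentiableAt ℝ g s := by
    intro s hs
    apply DifferentiableAt.mul
    · apply DifferentiableAt.cexp
      exact (differentiableAt_const (2 * Complex.I * β)).mul Complex.ofRealCLM.differentiableAt
    · exact hv s hs
  set K : ℝ := B' * Real.exp (-2 * r * β.im) with hKdef
  have hK : 0 < K := mul_pos hB' (Real.exp_pos _)
  -- pointwise bound on deriv g for s ≥ r
  have hptw : ∀ s : ℝ, r ≤ s → ‖deriv g s‖ ≤ K / s ^ (p + 2) := by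
    intro s hs
    have hs1 : 1 < s := lt_of_lt_of_le hr hs
    refine (hbound s hs1).trans ?_
    rw [hKdef]
    have hs0 : (0:ℝ) < s := lt_trans one_pos hs1
    have hexp : Real.exp (-2 * s * β.im) ≤ Real.exp (-2 * r * β.im) :=
      Real.exp_le_exp.2 (by nlinarith)
    have hnum : B' * Real.exp (-2 * s * β.im) ≤ B' * Real.exp (-2 * r * β.im) := by nlinarith
    exact div_le_div_of_nonneg_right hnum (by positivity) |>.trans_eq rfl
  -- the bound function
  have hKC : ∀ b : ℝ, r ≤ b →
      (∫ s in r..b, K / s ^ (p + 2)) ≤ K / ((p + 1) * r ^ (p + 1)) := by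
    intro b hb
    have hb0 : (0:ℝ) < b := lt_of_lt_of_le hr0 hb
    have h0 : (0:ℝ) ∉ Set.uIcc r b := by
      rw [Set.uIcc_of_le hb]
      rintro ⟨h1, h2⟩; linarith
    have heq : ∀ s ∈ Set.uIcc r b, K / s ^ (p + 2) = K * s ^ (-(p + 2 : ℤ)) := by
      intro s hs
      rw [Set.uIcc_of_le hb] at hs
      have hs0 : (0:ℝ) < s := lt_of_lt_of_le hr0 hs.1
      rw [zpow_neg, ← div_eq_mul_inv,
        show ((p:ℤ) + 2) = ((p + 2 : ℕ) : ℤ) by push_cast; ring, zpow_natCast]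
    have hI : (∫ s in r..b, K / s ^ (p + 2))
        = K * ((r ^ (p + 1))⁻¹ - (b ^ (p + 1))⁻¹) / ((p : ℝ) + 1) := by
      rw [intervalIntegral.integral_congr heq, intervalIntegral.integral_const_mul,
        integral_zpow (Or.inr ⟨by omega, h0⟩)]
      have hne : (-(p + 2 : ℤ) + 1) = -(p + 1 : ℤ) := by ring
      rw [hne]
      have hb' : b ^ (-(p + 1 : ℤ)) = (b ^ (p + 1) : ℝ)⁻¹ := by
        rw [zpow_neg, show ((p:ℤ) + 1) = ((p + 1 : ℕ) : ℤ) by push_cast; ring, zpow_natCast]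
      have hr' : r ^ (-(p + 1 : ℤ)) = (r ^ (p + 1) : ℝ)⁻¹ := by
        rw [zpow_neg, show ((p:ℤ) + 1) = ((p + 1 : ℕ) : ℤ) by push_cast; ring, zpow_natCast]
      rw [hb', hr']
      have hrp : (0:ℝ) < r ^ (p + 1) := by positivity
      have hbp : (0:ℝ) < b ^ (p + 1) := by positivity
      push_cast
      rw [show (-((p:ℝ) + 2) + 1) = -((p:ℝ) + 1) by ring, div_neg]
      ring
    rw [hI]
    have hrp : (0:ℝ) < r ^ (p + 1) := by positivity
    have hbp : (0:ℝ) < b ^ (p + 1) := by positivity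
    have hxy : K * ((r ^ (p + 1))⁻¹ - (b ^ (p + 1))⁻¹) ≤ K * (r ^ (p + 1))⁻¹ := by
      nlinarith [inv_nonneg.2 hbp.le]
    calc K * ((r ^ (p + 1))⁻¹ - (b ^ (p + 1))⁻¹) / ((p : ℝ) + 1)
        ≤ K * (r ^ (p + 1))⁻¹ / ((p : ℝ) + 1) :=
          div_le_div_of_nonneg_right hxy (by positivity) |>.trans_eq rfl
      _ = K / ((↑p + 1) * r ^ (p + 1)) := by
          rw [← div_eq_mul_inv, div_div, mul_comm]
  -- main inequality for each b ≥ r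
  have key : ∀ b : ℝ, r ≤ b → ‖g r‖ ≤ ‖g b‖ + K / ((p + 1) * r ^ (p + 1)) := by
    intro b hb
    have hb0 : (0:ℝ) < b := lt_of_lt_of_le hr0 hb
    have hcont : ContinuousOn (fun s : ℝ => K / s ^ (p + 2)) (Set.uIcc r b) := by
      apply ContinuousOn.div continuousOn_const (by fun_prop)
      intro x hx
      rw [Set.uIcc_of_le hb] at hx
      have : (0:ℝ) < x := lt_of_lt_of_le hr0 hx.1
      positivity
    have hint : IntervalIntegrable (fun s : ℝ => K / s ^ (p + 2)) volume r b :=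
      hcont.intervalIntegrable
    have hmeas : AEStronglyMeasurable (deriv g) (volume.restrict (Set.uIoc r b)) :=
      (measurable_deriv g).aestronglyMeasurable
    have hintg : IntervalIntegrable (deriv g) volume r b := by
      apply hint.mono_fun hmeas
      filter_upwards [ae_restrict_mem measurableSet_uIoc] with s hs
      rw [Set.uIoc_of_le hb] at hs
      have h1 := hptw s hs.1.le
      have : (0:ℝ) < s := lt_of_lt_of_le hr0 hs.1.le
      calc ‖deriv g s‖ ≤ K / s ^ (p + 2) := h1
        _ ≤ ‖K / s ^ (p + 2)‖ := le_abs_self _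
    have hftc : (∫ s in r..b, deriv g s) = g b - g r := by
      apply intervalIntegral.integral_deriv_eq_sub
      · intro x hx
        rw [Set.uIcc_of_le hb] at hx
        exact hgdiff x (lt_of_lt_of_le hr hx.1)
      · exact hintg
    have hnorm : ‖g b - g r‖ ≤ ∫ s in r..b, K / s ^ (p + 2) := by
      rw [← hftc]
      have hInt : (0:ℝ) ≤ ∫ s in r..b, K / s ^ (p + 2) := by
        apply intervalIntegral.integral_nonneg hb
        intro s hs
        have : (0:ℝ) < s := lt_of_lt_of_le hr0 hs.1
        positivity
      refine (intervalIntegral.norm_integral_le_of_norm_le hb ?_ hint).trans_eq rfl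
      filter_upwards with s hs
      exact hptw s hs.1.le
    have := (norm_sub_norm_le (g r) (g b)).trans ((norm_sub_rev (g r) (g b) ▸ hnorm).trans (hKC b hb))
    linarith
  -- take limit b → ∞
  have hglim : Tendsto (fun b => ‖g b‖) atTop (nhds 0) := by
    have hb1 : ∀ᶠ b in atTop, ‖g b‖ ≤ ‖v b‖ := by
      filter_upwards [eventually_ge_atTop (0:ℝ)] with b hb
      have : ‖g b‖ = Real.exp (-(2 * b * β.im)) * ‖v b‖ := by
        rw [hgdef]
        simp only [norm_mul, Complex.norm_exp]
        congr 1
        congr 1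
        simp [Complex.mul_re, Complex.mul_im]
        ring
      rw [this]
      have h1 : Real.exp (-(2 * b * β.im)) ≤ 1 := by
        rw [Real.exp_le_one_iff]
        nlinarith
      nlinarith [norm_nonneg (v b)]
    have h0 : ∀ b : ℝ, 0 ≤ ‖g b‖ := fun b => norm_nonneg _
    exact squeeze_zero' (Filter.Eventually.of_forall h0) hb1 (by simpa using hlim.norm)
  have hfinal : ‖g r‖ ≤ K / ((p + 1) * r ^ (p + 1)) := by
    have htend : Tendsto (fun b => ‖g b‖ + K / ((p + 1) * r ^ (p + 1))) atTop
        (nhds (0 + K / ((p + 1) * r ^ (p + 1)))) :=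
      hglim.add tendsto_const_nhds
    have := ge_of_tendsto htend (eventually_atTop.2 ⟨r, key⟩)
    simpa using this
  -- translate back to v
  have hvg : ‖v r‖ = Real.exp (2 * r * β.im) * ‖g r‖ := by
    have : ‖g r‖ = Real.exp (-(2 * r * β.im)) * ‖v r‖ := by
      rw [hgdef]
      simp only [norm_mul, Complex.norm_exp]
      congr 1
      congr 1
      simp [Complex.mul_re, Complex.mul_im]
      ring
    rw [this, ← mul_assoc, ← Real.exp_add]
    simp
  rw [hvg]
  calc Real.exp (2 * r * β.im) * ‖g r‖
      ≤ Real.exp (2 * r * β.im) * (K / ((p + 1) * r ^ (p + 1))) := by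
        gcongr
    _ = B' / ((p + 1) * r ^ (p + 1)) := by
        rw [hKdef]
        rw [div_eq_mul_inv, div_eq_mul_inv, ← mul_assoc, ← mul_assoc]
        congr 1
        rw [mul_comm (Real.exp _) B', mul_assoc, ← Real.exp_add]
        simp
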